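/- Let θ ∈ (0, π/2) and φ ∈ [0, 2θ]. Then the first time at which the point t·(cos θ, sin θ) (moving along the ray from the origin in direction (cos θ, sin θ) at unit speed) inspects P_φ equals 1/cos(θ − φ); that is, inf{ t ≥ 0 : t·(cos θ, sin θ) inspects P_φ } = 1/cos(θ − φ). -/

import Mathlib

open Real Set

/-- The point of the unit circle at angle `φ`. -/
noncomputable def Ppt (φ : ℝ) : EuclideanSpace ℝ (Fin 2) := WithLp.toLp 2 ![Real.cos φ, Real.sin φ]

/-- `A` inspects the perimeter point `P_φ` if no convex combination of `A` and `P_φ`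
lies in the open unit disk. -/
def Inspects (A : EuclideanSpace ℝ (Fin 2)) (φ : ℝ) : Prop :=
  ∀ s ∈ Set.Icc (0:ℝ) 1, 1 ≤ ‖(1 - s) • A + s • Ppt φ‖

lemma inner_Ppt (θ φ : ℝ) : (inner ℝ (Ppt θ) (Ppt φ) : ℝ) = Real.cos (θ - φ) := by
  simp [Ppt, PiLp.inner_apply, Fin.sum_univ_two, RCLike.inner_apply, Real.cos_sub, mul_comm]

lemma norm_Ppt (φ : ℝ) : ‖Ppt φ‖ = 1 := by
  have h : ‖Ppt φ‖ ^ 2 = 1 := by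
    rw [← real_inner_self_eq_norm_sq, inner_Ppt]
    simp
  nlinarith [norm_nonneg (Ppt φ)]

lemma inspects_iff (A : EuclideanSpace ℝ (Fin 2)) (φ : ℝ) :
    Inspects A φ ↔ 1 ≤ (inner ℝ A (Ppt φ) : ℝ) := by
  set c : ℝ := inner ℝ A (Ppt φ) with hc
  have key : ∀ s : ℝ, ‖(1 - s) • A + s • Ppt φ‖ ^ 2
      = (1 - s) ^ 2 * ‖A‖ ^ 2 + 2 * (1 - s) * s * c + s ^ 2 := by
    intro s
    rw [norm_add_sq_real, norm_smul, norm_smul, real_inner_smul_left,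
      real_inner_smul_right, norm_Ppt, Real.norm_eq_abs, Real.norm_eq_abs,
      mul_pow, mul_pow, sq_abs, sq_abs]
    ring
  have hK : 0 ≤ ‖A‖ ^ 2 - 2 * c + 1 := by
    nlinarith [real_inner_le_norm A (Ppt φ), norm_Ppt φ, sq_nonneg (‖A‖ - 1), hc]
  set K : ℝ := ‖A‖ ^ 2 - 2 * c + 1 with hKdef
  constructor
  · intro h
    by_contra hlt
    push_neg at hlt
    set u : ℝ := (1 - c) / (K + 1) with hu
    have hK1 : 0 < K + 1 := by linarith
    have hu0 : 0 < u := div_pos (by linarith) hK1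
    have huK : u * (K + 1) = 1 - c := div_mul_cancel₀ _ (ne_of_gt hK1)
    have hu1 : u ≤ 1 := by
      rw [hu, div_le_one hK1]
      nlinarith [real_inner_le_norm A (Ppt φ), norm_Ppt φ, norm_nonneg A, sq_nonneg (‖A‖ - 1)]
    have hs := h (1 - u) ⟨by linarith, by linarith⟩
    have hkey := key (1 - u)
    have hnn := norm_nonneg ((1 - (1 - u)) • A + (1 - u) • Ppt φ)
    -- expr - 1 = u * (u * K + 2 * (c - 1)) < 0
    have huKle : u * K ≤ 1 - c := by nlinarith
    nlinarith [hs, hkey, hnn, mul_pos hu0 (show (0:ℝ) < 1 - c by linarith)]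
  · intro h s hs
    have hkey := key s
    have hnn := norm_nonneg ((1 - s) • A + s • Ppt φ)
    have h1 : 0 ≤ (1 - s) * ((1 - s) * K + 2 * (c - 1)) := by
      have h2 : 0 ≤ 1 - s := by linarith [hs.2]
      have h3 : 0 ≤ (1 - s) * K := mul_nonneg h2 hK
      nlinarith
    nlinarith

theorem first_inspection_time_on_ray (θ φ : ℝ) (hθ : θ ∈ Set.Ioo 0 (π/2))
    (hφ : φ ∈ Set.Icc 0 (2*θ)) :
    sInf {t : ℝ | 0 ≤ t ∧ Inspects (t • Ppt θ) φ} = 1 / Real.cos (θ - φ) := by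
  obtain ⟨hθ0, hθ1⟩ := hθ
  obtain ⟨hφ0, hφ1⟩ := hφ
  have hc : 0 < Real.cos (θ - φ) := by
    apply Real.cos_pos_of_mem_Ioo
    constructor <;> [linarith; linarith]
  have hset : {t : ℝ | 0 ≤ t ∧ Inspects (t • Ppt θ) φ}
      = Set.Ici (1 / Real.cos (θ - φ)) := by
    ext t
    simp only [Set.mem_setOf_eq, Set.mem_Ici]
    rw [inspects_iff]
    have hin : (inner ℝ (t • Ppt θ) (Ppt φ) : ℝ) = t * Real.cos (θ - φ) := by
      rw [real_inner_smul_left, inner_Ppt]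
    rw [hin]
    constructor
    · rintro ⟨ht, h⟩
      rw [div_le_iff₀ hc]
      linarith
    · intro h
      have h1 : 1 ≤ t * Real.cos (θ - φ) := by
        rw [← div_le_iff₀ hc]
        exact h
      exact ⟨le_trans (le_of_lt (div_pos one_pos hc)) h, h1⟩
  rw [hset]
  exact csInf_Ici
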